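/- The set of parameters α ∈ (0,1) for which the flipped α-continued fraction map T_α does not have the matching property (i.e., there exist no non-negative integers M, N with T_α^M(α) = T_α^N(1-α)) has Lebesgue measure zero. -/

import Mathlib

open Set MeasureTheory Filter Topology
open scoped Classical

/-- The Gauss map `G(x) = 1/x - ⌊1/x⌋`. -/
noncomputable def gauss (x : ℝ) : ℝ := Int.fract (1 / x)

/-- The flipped region `D_α = ⋃_{n ≥ 1} [1/(n+α), 1/n]`. -/
def Dset (α : ℝ) : Set ℝ := ⋃ n : ℕ, Set.Icc (1 / ((n : ℝ) + 1 + α)) (1 / ((n : ℝ) + 1))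

/-- The flipped α-continued fraction map `T_α`. -/
noncomputable def T (α x : ℝ) : ℝ := if x ∈ Dset α then 1 - gauss x else gauss x

namespace Stmt10

open scoped ENNReal

/-- Points that are irrational and in `(0,1)`. -/
def Good (x : ℝ) : Prop := Irrational x ∧ x ∈ Set.Ioo (0:ℝ) 1

lemma Good.irr {x : ℝ} (h : Good x) : Irrational x := h.1
lemma Good.pos {x : ℝ} (h : Good x) : 0 < x := h.2.1
lemma Good.lt_one {x : ℝ} (h : Good x) : x < 1 := h.2.2
lemma Good.ne_zero {x : ℝ} (h : Good x) : x ≠ 0 := ne_of_gt h.2.1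

lemma good_one_sub {x : ℝ} (h : Good x) : Good (1 - x) := by
  refine ⟨?_, by constructor <;> [linarith [h.2.2]; linarith [h.2.1]]⟩
  have h1 := h.1.ratCast_sub (q := 1)
  have h2 : ((1:ℚ):ℝ) = 1 := by norm_num
  rwa [h2] at h1

lemma good_inv_irr {x : ℝ} (h : Good x) : Irrational (1/x) := by
  rw [one_div]; exact h.1.inv

lemma one_lt_inv_of {x : ℝ} (h : x ∈ Set.Ioo (0:ℝ) 1) : 1 < 1/x := by
  rw [lt_div_iff₀ h.1]; linarith [h.2]

lemma irrational_fract {t : ℝ} (h : Irrational t) : Irrational (Int.fract t) := by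
  have h2 := h.sub_intCast ⌊t⌋
  rw [Int.fract]
  exact h2

lemma gauss_good {x : ℝ} (h : Good x) : Good (gauss x) := by
  have hirr : Irrational (gauss x) := irrational_fract (good_inv_irr h)
  refine ⟨hirr, ?_, Int.fract_lt_one _⟩
  rcases lt_or_eq_of_le (Int.fract_nonneg (1/x)) with h0 | h0
  · exact h0
  · exfalso
    have h0' : gauss x = 0 := by rw [gauss, ← h0]
    rw [h0'] at hirr
    exact Rat.not_irrational 0 (by simpa using hirr)

/-- The key description of the flip region. -/
lemma mem_Dset_iff {α x : ℝ} (hα : α ∈ Set.Ioo (0:ℝ) 1) (hx : x ∈ Set.Ioo (0:ℝ) 1) :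
    x ∈ Dset α ↔ gauss x ≤ α := by
  have hx0 : 0 < x := hx.1
  have hinv1 : 1 < 1/x := one_lt_inv_of hx
  constructor
  · intro hmem
    rw [Dset, Set.mem_iUnion] at hmem
    obtain ⟨n, hn⟩ := hmem
    have hpos : (0:ℝ) < (n:ℝ) + 1 := by positivity
    have hposα : (0:ℝ) < (n:ℝ) + 1 + α := by
      have := hα.1; positivity
    have h1 : (n:ℝ) + 1 ≤ 1/x := by
      rw [le_div_iff₀ hx0]
      have h2 := hn.2
      rw [le_div_iff₀ hpos] at h2
      nlinarith
    have h2 : 1/x ≤ (n:ℝ) + 1 + α := by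
      rw [div_le_iff₀ hx0]
      have h1' := hn.1
      rw [div_le_iff₀ hposα] at h1'
      nlinarith
    have hfl : ⌊1/x⌋ = (n:ℤ) + 1 := by
      apply Int.floor_eq_iff.mpr
      constructor
      · push_cast; exact h1
      · push_cast; have := hα.2; linarith
    rw [gauss, Int.fract, hfl]
    push_cast
    linarith
  · intro hle
    rw [Dset, Set.mem_iUnion]
    have hfl1 : 1 ≤ ⌊1/x⌋ := by
      apply Int.le_floor.mpr
      exact_mod_cast hinv1.le
    refine ⟨(⌊1/x⌋ - 1).toNat, ?_⟩
    have hcast : (((⌊1/x⌋ - 1).toNat : ℕ) : ℝ) + 1 = ((⌊1/x⌋ : ℤ) : ℝ) := by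
      have h1 : ((⌊1/x⌋ - 1).toNat : ℤ) = ⌊1/x⌋ - 1 := Int.toNat_of_nonneg (by omega)
      have h2 : (((⌊1/x⌋ - 1).toNat : ℕ) : ℝ) = ((⌊1/x⌋ : ℝ) - 1) := by
        exact_mod_cast congrArg (fun z : ℤ => (z : ℝ)) h1
      rw [h2]; ring
    have hfl_pos : (0:ℝ) < (⌊1/x⌋ : ℝ) := by exact_mod_cast hfl1
    have hfract : 1/x - (⌊1/x⌋ : ℝ) ≤ α := by
      have : gauss x = 1/x - (⌊1/x⌋ : ℝ) := by rw [gauss, Int.fract]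
      linarith [hle, this ▸ hle]
    constructor
    · rw [hcast, div_le_iff₀ (by linarith [hα.1] : (0:ℝ) < (⌊1/x⌋ : ℝ) + α)]
      have hxle : 1/x ≤ (⌊1/x⌋ : ℝ) + α := by linarith
      calc (1:ℝ) = (1/x) * x := by field_simp
      _ ≤ ((⌊1/x⌋ : ℝ) + α) * x := by nlinarith
      _ = x * ((⌊1/x⌋ : ℝ) + α) := by ring
    · rw [hcast, le_div_iff₀ hfl_pos]
      have : ((⌊1/x⌋ : ℤ) : ℝ) ≤ 1/x := Int.floor_le _
      calc x * (⌊1/x⌋ : ℝ) ≤ x * (1/x) := by nlinarith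
      _ = 1 := by field_simp

lemma T_eq {α x : ℝ} (hα : α ∈ Set.Ioo (0:ℝ) 1) (hx : x ∈ Set.Ioo (0:ℝ) 1) :
    T α x = if gauss x ≤ α then 1 - gauss x else gauss x := by
  unfold T
  by_cases h : gauss x ≤ α
  · rw [if_pos ((mem_Dset_iff hα hx).mpr h), if_pos h]
  · rw [if_neg (fun hm => h ((mem_Dset_iff hα hx).mp hm)), if_neg h]

lemma T_good {α x : ℝ} (hα : α ∈ Set.Ioo (0:ℝ) 1) (h : Good x) : Good (T α x) := by
  have hg := gauss_good h
  rw [T_eq hα h.2]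
  split
  · exact good_one_sub hg
  · exact hg

lemma T_congr {α x y : ℝ} (hα : α ∈ Set.Ioo (0:ℝ) 1) (hx : x ∈ Set.Ioo (0:ℝ) 1)
    (hy : y ∈ Set.Ioo (0:ℝ) 1) (h : gauss x = gauss y) : T α x = T α y := by
  rw [T_eq hα hx, T_eq hα hy, h]

/-- The induced map on Gauss-values. -/
noncomputable def R (α g : ℝ) : ℝ := if g ≤ α then gauss (1 - g) else gauss g

lemma gauss_T {α x : ℝ} (hα : α ∈ Set.Ioo (0:ℝ) 1) (hx : x ∈ Set.Ioo (0:ℝ) 1) :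
    gauss (T α x) = R α (gauss x) := by
  rw [T_eq hα hx, R]
  split <;> rfl

lemma gauss_eq (x : ℝ) (n : ℤ) (h1 : (n:ℝ) ≤ 1/x) (h2 : 1/x < (n:ℝ) + 1) :
    gauss x = 1/x - (n:ℝ) := by
  have hfl : ⌊1/x⌋ = n := Int.floor_eq_iff.mpr ⟨h1, by exact_mod_cast h2⟩
  rw [gauss, Int.fract, hfl]

lemma gauss_inv_one_add {q : ℝ} (h0 : 0 ≤ q) (h1 : q < 1) : gauss (1/(1+q)) = q := by
  have hq : (0:ℝ) < 1 + q := by linarith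
  rw [gauss, one_div_one_div]
  have : (1:ℝ) + q = q + ((1:ℤ):ℝ) := by push_cast; ring
  rw [this, Int.fract_add_intCast, Int.fract_eq_self.mpr ⟨h0, h1⟩]

lemma gauss_one_sub_inv {q : ℝ} (h0 : 0 < q) (h1 : q < 1) :
    gauss (1 - 1/(1+q)) = gauss q := by
  have hq : (0:ℝ) < 1 + q := by linarith
  have he : 1 - 1/(1+q) = q/(1+q) := by field_simp; ring
  have hinv : 1/(q/(1+q)) = 1/q + ((1:ℤ):ℝ) := by
    push_cast
    rw [one_div_div]
    field_simp
  rw [gauss, he, hinv, Int.fract_add_intCast, gauss]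

lemma fract_sub_one (t : ℝ) : Int.fract (t - 1) = Int.fract t := by
  have : t - 1 = t - ((1:ℤ):ℝ) := by push_cast; ring
  rw [this, Int.fract_sub_intCast]

/-- The parabolic cascade: the `R`-orbit of any good point `p` reaches `1/(1 + G(p))`. -/
lemma cascade {α : ℝ} (hα : 1/2 < α) :
    ∀ n : ℕ, ∀ p : ℝ, Good p → 1/p < (n:ℝ) + 2 → ∃ i : ℕ, (R α)^[i] p = 1/(1 + gauss p) := by
  intro n
  induction n with
  | zero =>
    intro p hp hlt
    refine ⟨0, ?_⟩
    have h1 : 1 < 1/p := one_lt_inv_of hp.2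
    have hg : gauss p = 1/p - 1 := by
      have := gauss_eq p 1 (by exact_mod_cast h1.le) (by push_cast; push_cast at hlt; linarith)
      simpa using this
    rw [Function.iterate_zero_apply, hg]
    have h2 : 1 + (1/p - 1) = 1/p := by ring
    rw [h2, one_div_one_div]
  | succ n ih =>
    intro p hp hlt
    by_cases hcase : 1/p < (n:ℝ) + 2
    · exact ih p hp hcase
    · push_neg at hcase
      have hn0 : (0:ℝ) ≤ (n:ℝ) := Nat.cast_nonneg n
      have h2 : (2:ℝ) ≤ 1/p := by linarith
      have hppos := hp.pos
      have hphalf : p < 1/2 := by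
        have hle : p ≤ 1/2 := by
          have h2p : 2 * p ≤ 1 := (le_div_iff₀ hppos).mp h2
          linarith
        rcases lt_or_eq_of_le hle with h | h
        · exact h
        · exfalso
          apply Rat.not_irrational (1/2)
          have heq : ((1/2:ℚ):ℝ) = p := by rw [h]; norm_num
          rw [heq]
          exact hp.1
      have h1p : (0:ℝ) < 1 - p := by linarith
      set p' := p/(1-p) with hp'def
      have hp'pos : 0 < p' := div_pos hppos h1p
      have hinv : 1/p' = 1/p - 1 := by
        rw [hp'def, one_div_div]
        field_simp
      have hp'good : Good p' := by
        refine ⟨?_, hp'pos, ?_⟩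
        · have h1 : Irrational (1 - p) := (good_one_sub hp).1
          have h2' : Irrational (1/(1-p)) := by
            rw [one_div]; exact h1.inv
          have h3 : Irrational (1/(1-p) - ((1:ℤ):ℝ)) := h2'.sub_intCast 1
          have h4 : p' = 1/(1-p) - 1 := by
            rw [hp'def]; field_simp; ring
          rw [h4]
          simpa using h3
        · rw [hp'def, div_lt_one h1p]; linarith
      have hR : R α p = p' := by
        rw [R, if_pos (by linarith : p ≤ α)]
        have hb1 : (1:ℝ) ≤ 1/(1-p) := by
          rw [le_div_iff₀ h1p]; linarith
        have hb2 : 1/(1-p) < 2 := by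
          rw [div_lt_iff₀ h1p]; linarith
        have := gauss_eq (1-p) 1 (by exact_mod_cast hb1) (by push_cast; linarith)
        rw [this, hp'def]
        push_cast
        field_simp
        ring
      have hgg : gauss p' = gauss p := by
        rw [gauss, hinv, fract_sub_one, gauss]
      have hlt' : 1/p' < (n:ℝ) + 2 := by
        rw [hinv]; push_cast at hlt; linarith
      obtain ⟨i, hi⟩ := ih p' hp'good hlt'
      refine ⟨i+1, ?_⟩
      rw [Function.iterate_succ_apply, hR, hi, hgg]

/-- The two starting points. -/
noncomputable def Xpt (α : ℝ) : Bool → ℝ := fun σ => if σ then α else 1 - α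

section Main

variable {α : ℝ}

lemma hαIoo (hα1 : 1/2 < α) (hα2 : α < 1) : α ∈ Set.Ioo (0:ℝ) 1 := ⟨by linarith, hα2⟩

lemma Xpt_good (hα1 : 1/2 < α) (hα2 : α < 1) (hirr : Irrational α) (σ : Bool) :
    Good (Xpt α σ) := by
  cases σ
  · simp only [Xpt, if_false, Bool.false_eq_true]
    exact good_one_sub ⟨hirr, hαIoo hα1 hα2⟩
  · simp only [Xpt, if_true]
    exact ⟨hirr, hαIoo hα1 hα2⟩

lemma orbGood (hα1 : 1/2 < α) (hα2 : α < 1) (hirr : Irrational α) (σ : Bool) :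
    ∀ j : ℕ, Good ((T α)^[j] (Xpt α σ)) := by
  intro j
  induction j with
  | zero => simpa using Xpt_good hα1 hα2 hirr σ
  | succ j ihj =>
    rw [Function.iterate_succ_apply']
    exact T_good (hαIoo hα1 hα2) ihj

lemma gauss_iter (hα1 : 1/2 < α) (hα2 : α < 1) (hirr : Irrational α) (σ : Bool) (j : ℕ) :
    ∀ i : ℕ, gauss ((T α)^[j+i] (Xpt α σ)) = (R α)^[i] (gauss ((T α)^[j] (Xpt α σ))) := by
  intro i
  induction i with
  | zero => simp
  | succ i ihi =>
    have h1 : j + (i+1) = (j+i) + 1 := by omega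
    rw [h1, Function.iterate_succ_apply',
      gauss_T (hαIoo hα1 hα2) (orbGood hα1 hα2 hirr σ (j+i)).2, ihi,
      Function.iterate_succ_apply']

lemma collision (hα1 : 1/2 < α) (hα2 : α < 1) (hirr : Irrational α)
    (hNM : ¬ ∃ M N : ℕ, (T α)^[M] α = (T α)^[N] (1 - α)) {σ : Bool} {a b : ℕ}
    (h : gauss ((T α)^[a] (Xpt α σ)) = gauss ((T α)^[b] (Xpt α (!σ)))) : False := by
  have h1 : (T α)^[a+1] (Xpt α σ) = (T α)^[b+1] (Xpt α (!σ)) := by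
    rw [Function.iterate_succ_apply', Function.iterate_succ_apply']
    exact T_congr (hαIoo hα1 hα2) (orbGood hα1 hα2 hirr σ a).2
      (orbGood hα1 hα2 hirr (!σ) b).2 h
  cases σ
  · exact hNM ⟨b+1, a+1, by simpa [Xpt] using h1.symm⟩
  · exact hNM ⟨a+1, b+1, by simpa [Xpt] using h1⟩

lemma cGood (hα1 : 1/2 < α) (hα2 : α < 1) (hirr : Irrational α) :
    ∀ k : ℕ, Good (gauss^[k] ((1-α)/α)) := by
  have hα0 : (0:ℝ) < α := by linarith
  have hceq : (1-α)/α = 1/α - 1 := by field_simp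
  have hc : Good ((1-α)/α) := by
    refine ⟨?_, div_pos (by linarith) hα0, (div_lt_one hα0).mpr (by linarith)⟩
    rw [hceq]
    have h1 : Irrational (1/α) := by rw [one_div]; exact hirr.inv
    have := h1.sub_intCast 1
    simpa using this
  intro k
  induction k with
  | zero => simpa using hc
  | succ k ihk =>
    rw [Function.iterate_succ_apply']
    exact gauss_good ihk

lemma gauss_alpha (hα1 : 1/2 < α) (hα2 : α < 1) : gauss α = (1-α)/α := by
  have hα0 : (0:ℝ) < α := by linarith
  have hb1 : (1:ℝ) ≤ 1/α := by
    rw [le_div_iff₀ hα0]; linarith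
  have hb2 : 1/α < 2 := by
    rw [div_lt_iff₀ hα0]; linarith
  have := gauss_eq α 1 (by exact_mod_cast hb1) (by push_cast; linarith)
  rw [this]
  field_simp
  push_cast; ring

lemma gauss_c (hα1 : 1/2 < α) (hα2 : α < 1) : gauss ((1-α)/α) = gauss (1-α) := by
  have hα0 : (0:ℝ) < α := by linarith
  have h1α : (0:ℝ) < 1 - α := by linarith
  have h1 : 1/((1-α)/α) = 1/(1-α) - 1 := by
    rw [one_div_div]; field_simp; ring
  rw [gauss, h1, fract_sub_one, gauss]

/-- The main induction: if there is no matching, the leader/follower structure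
propagates forever, forcing the Gauss orbit of `c = (1-α)/α` to stay in `[c, α]`. -/
lemma main_induction (hα1 : 1/2 < α) (hα2 : α < 1) (hirr : Irrational α)
    (hNM : ¬ ∃ M N : ℕ, (T α)^[M] α = (T α)^[N] (1 - α)) :
    ∀ k : ℕ, (∃ (σ : Bool) (m n : ℕ),
        gauss ((T α)^[m] (Xpt α σ)) = gauss^[k] ((1-α)/α) ∧
        gauss ((T α)^[n] (Xpt α (!σ))) = gauss^[k+1] ((1-α)/α)) ∧
      (1 ≤ k → (1-α)/α ≤ gauss^[k] ((1-α)/α)) := by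
  have hα0 : (0:ℝ) < α := by linarith
  intro k
  induction k with
  | zero =>
    refine ⟨⟨true, 0, 0, ?_, ?_⟩, by omega⟩
    · simpa [Xpt] using gauss_alpha hα1 hα2
    · have : gauss ((1:ℝ) - α) = gauss^[1] ((1-α)/α) := by
        rw [Function.iterate_one, gauss_c hα1 hα2]
      simpa [Xpt] using this
  | succ k ihk =>
    obtain ⟨⟨σ, m, n, hm, hn⟩, _⟩ := ihk
    have hpGood : Good (gauss^[k] ((1-α)/α)) := cGood hα1 hα2 hirr k
    have hqGood : Good (gauss^[k+1] ((1-α)/α)) := cGood hα1 hα2 hirr (k+1)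
    have hqit : gauss^[k+1] ((1-α)/α) = gauss (gauss^[k] ((1-α)/α)) :=
      Function.iterate_succ_apply' gauss k _
    have hpα : gauss^[k] ((1-α)/α) ≤ α := by
      by_contra hgt
      push_neg at hgt
      apply collision hα1 hα2 hirr hNM (σ := σ) (a := m+1) (b := n)
      have h1 := gauss_iter hα1 hα2 hirr σ m 1
      rw [h1, hm, Function.iterate_one,
        show R α (gauss^[k] ((1-α)/α)) = gauss (gauss^[k] ((1-α)/α)) from
          if_neg (not_le.mpr hgt), hn, hqit]
    obtain ⟨n0, hn0⟩ := exists_nat_gt (1/(gauss^[k] ((1-α)/α)))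
    obtain ⟨i, hi⟩ := cascade hα1 n0 (gauss^[k] ((1-α)/α)) hpGood (by push_cast; linarith)
    have hqIoo : gauss^[k+1] ((1-α)/α) ∈ Set.Ioo (0:ℝ) 1 := hqGood.2
    have h1q : (0:ℝ) < 1 + gauss^[k+1] ((1-α)/α) := by linarith [hqIoo.1]
    have hi' : (R α)^[i] (gauss^[k] ((1-α)/α)) = 1/(1 + gauss^[k+1] ((1-α)/α)) := by
      rw [hi, hqit]
    have heIoo : 1/(1 + gauss^[k+1] ((1-α)/α)) ∈ Set.Ioo (0:ℝ) 1 := by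
      constructor
      · positivity
      · rw [div_lt_one h1q]; linarith [hqIoo.1]
    have hge : gauss (1/(1 + gauss^[k+1] ((1-α)/α))) = gauss^[k+1] ((1-α)/α) :=
      gauss_inv_one_add hqIoo.1.le hqIoo.2
    have hRi : gauss ((T α)^[m+i] (Xpt α σ)) = 1/(1 + gauss^[k+1] ((1-α)/α)) := by
      rw [gauss_iter hα1 hα2 hirr σ m i, hm, hi']
    by_cases heα : 1/(1 + gauss^[k+1] ((1-α)/α)) ≤ α
    · have hstep : gauss ((T α)^[m+i+1] (Xpt α σ)) = gauss^[k+1+1] ((1-α)/α) := by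
        have h1 := gauss_iter hα1 hα2 hirr σ (m+i) 1
        rw [show m+i+1 = (m+i)+1 from rfl, h1, Function.iterate_one, hRi,
          show R α (1/(1 + gauss^[k+1] ((1-α)/α)))
              = gauss (1 - 1/(1 + gauss^[k+1] ((1-α)/α))) from if_pos heα,
          gauss_one_sub_inv hqIoo.1 hqIoo.2,
          Function.iterate_succ_apply' gauss (k+1) ((1-α)/α)]
      refine ⟨⟨!σ, n, m+i+1, hn, ?_⟩, ?_⟩
      · rw [Bool.not_not, hstep]
      · intro _
        have h2 := (div_le_iff₀ h1q).mp heα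
        have h1 : 1/α ≤ 1 + gauss^[k+1] ((1-α)/α) := by
          rw [div_le_iff₀ hα0]
          nlinarith
        have h3 : (1-α)/α = 1/α - 1 := by field_simp
        linarith [h3, h1]
    · exfalso
      push_neg at heα
      apply collision hα1 hα2 hirr hNM (σ := σ) (a := m+i+1) (b := n)
      have h1 := gauss_iter hα1 hα2 hirr σ (m+i) 1
      rw [show m+i+1 = (m+i)+1 from rfl, h1, Function.iterate_one, hRi,
        show R α (1/(1 + gauss^[k+1] ((1-α)/α)))
            = gauss (1/(1 + gauss^[k+1] ((1-α)/α))) from if_neg (not_le.mpr heα),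
        hge, hn]

lemma main_reduction (hα1 : 1/2 < α) (hα2 : α < 1) (hirr : Irrational α)
    (hNM : ¬ ∃ M N : ℕ, (T α)^[M] α = (T α)^[N] (1 - α)) :
    ∀ k : ℕ, 1 ≤ k → gauss^[k] ((1-α)/α) ∈ Set.Icc ((1-α)/α) 1 := by
  intro k hk
  refine ⟨(main_induction hα1 hα2 hirr hNM k).2 hk, ?_⟩
  exact (cGood hα1 hα2 hirr k).2.2.le

end Main

/-- The set of points whose entire forward Gauss orbit stays in `[1/(m+1), 1]`. -/
def Am (m : ℕ) : Set ℝ := {x | ∀ j : ℕ, gauss^[j] x ∈ Set.Icc (1/((m:ℝ)+1)) 1}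

lemma bad_mem {α : ℝ} (hα1 : 1/2 < α) (hα2 : α < 1) (hirr : Irrational α)
    (hNM : ¬ ∃ M N : ℕ, (T α)^[M] α = (T α)^[N] (1 - α)) :
    ∃ m k : ℕ, α ∈ (fun t : ℝ => 1 - ((k:ℝ)+t)⁻¹) '' (Am m) := by
  have hα0 : (0:ℝ) < α := by linarith
  set c := (1-α)/α with hcdef
  have hc0 : 0 < c := div_pos (by linarith) hα0
  obtain ⟨m, hm⟩ := exists_nat_gt (1/c)
  have hsc : 1/((m:ℝ)+1) ≤ c := by
    have hm1 : (0:ℝ) < (m:ℝ) + 1 := by positivity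
    rw [div_le_iff₀ hm1]
    have h1 : 1/c < (m:ℝ)+1 := by
      have : (m:ℝ) < m+1 := by linarith
      linarith
    have := (div_lt_iff₀ hc0).mp h1
    nlinarith
  set y := gauss (1 - α) with hydef
  have hyAm : y ∈ Am m := by
    intro j
    have h1 : gauss^[j] y = gauss^[j+1] c := by
      rw [Function.iterate_succ_apply, hydef, hcdef, gauss_c hα1 hα2]
    rw [h1]
    have h2 := main_reduction hα1 hα2 hirr hNM (j+1) (by omega)
    exact ⟨le_trans hsc h2.1, h2.2⟩
  have h1α : (0:ℝ) < 1 - α := by linarith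
  have h1αlt : (2:ℝ) < 1/(1-α) := by
    rw [lt_div_iff₀ h1α]; linarith
  have hfl2 : 2 ≤ ⌊1/(1-α)⌋ := by
    apply Int.le_floor.mpr
    exact_mod_cast h1αlt.le
  refine ⟨m, ⌊1/(1-α)⌋.toNat, y, hyAm, ?_⟩
  have hcast : ((⌊1/(1-α)⌋.toNat : ℕ) : ℝ) = ((⌊1/(1-α)⌋ : ℤ) : ℝ) := by
    exact_mod_cast congrArg (fun z : ℤ => (z:ℝ)) (Int.toNat_of_nonneg (by omega))
  have hky : ((⌊1/(1-α)⌋.toNat : ℕ) : ℝ) + y = 1/(1-α) := by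
    rw [hcast, hydef, gauss, Int.fract]
    ring
  show 1 - (((⌊1/(1-α)⌋.toNat : ℕ) : ℝ) + y)⁻¹ = α
  rw [hky, one_div, inv_inv]
  ring

/-! ### Measure-theoretic part -/

lemma measurable_gauss : Measurable gauss := by
  have h1 : Measurable (fun x : ℝ => 1/x) := by
    simpa [one_div] using (measurable_inv : Measurable (fun x : ℝ => x⁻¹))
  exact measurable_fract.comp h1

lemma measurable_Am (m : ℕ) : MeasurableSet (Am m) := by
  have h1 : Am m = ⋂ j : ℕ, (gauss^[j]) ⁻¹' (Set.Icc (1/((m:ℝ)+1)) 1) := by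
    ext x; simp [Am, Set.mem_iInter]
  rw [h1]
  exact MeasurableSet.iInter fun j => (measurable_gauss.iterate j) measurableSet_Icc

lemma Am_subset (m : ℕ) : Am m ⊆ Set.Icc (1/((m:ℝ)+1)) 1 := by
  intro x hx
  simpa using hx 0

lemma Am_pos {m : ℕ} {x : ℝ} (hx : x ∈ Am m) : 0 < x := by
  have := (Am_subset m hx).1
  have hm1 : (0:ℝ) < 1/((m:ℝ)+1) := by positivity
  linarith

/-- Covering of `Am m` by the inverse branches with bounded digit. -/
lemma Am_cover (m : ℕ) :
    Am m ⊆ ⋃ n : Fin (m+1), (fun t : ℝ => (((n:ℕ):ℝ)+1+t)⁻¹) '' (Am m) := by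
  intro x hx
  have hx0 : 0 < x := Am_pos hx
  have hx1 : x ≤ 1 := (Am_subset m hx).2
  have hxs : 1/((m:ℝ)+1) ≤ x := (Am_subset m hx).1
  have hinv_ge : (1:ℝ) ≤ 1/x := by
    rw [le_div_iff₀ hx0]; linarith
  have hinv_le : 1/x ≤ (m:ℝ)+1 := by
    rw [div_le_iff₀ hx0]
    have hm1 : (0:ℝ) < (m:ℝ)+1 := by positivity
    have := (div_le_iff₀ hm1).mp hxs
    nlinarith
  have hfl1 : 1 ≤ ⌊1/x⌋ := Int.le_floor.mpr (by exact_mod_cast hinv_ge)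
  have hflm : ⌊1/x⌋ ≤ (m:ℤ)+1 := by
    have h1 : ((⌊1/x⌋ : ℤ) : ℝ) ≤ 1/x := Int.floor_le _
    have h2 : ((⌊1/x⌋ : ℤ) : ℝ) ≤ (m:ℝ)+1 := le_trans h1 hinv_le
    exact_mod_cast h2
  have hgx : gauss x ∈ Am m := by
    intro j
    have h1 : gauss^[j] (gauss x) = gauss^[j+1] x := by
      rw [Function.iterate_succ_apply]
    rw [h1]; exact hx (j+1)
  have hdig : (⌊1/x⌋.toNat - 1 : ℕ) < m + 1 := by omega
  rw [Set.mem_iUnion]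
  refine ⟨⟨⌊1/x⌋.toNat - 1, hdig⟩, gauss x, hgx, ?_⟩
  have hcast : (((⌊1/x⌋.toNat - 1 : ℕ)) : ℝ) + 1 = ((⌊1/x⌋ : ℤ) : ℝ) := by
    have h1 : ((⌊1/x⌋.toNat : ℕ) : ℝ) = ((⌊1/x⌋ : ℤ) : ℝ) := by
      exact_mod_cast congrArg (fun z : ℤ => (z:ℝ)) (Int.toNat_of_nonneg (by omega))
    have h2 : 1 ≤ ⌊1/x⌋.toNat := by omega
    have h3 : (((⌊1/x⌋.toNat - 1 : ℕ)) : ℝ) = ((⌊1/x⌋.toNat : ℕ) : ℝ) - 1 := by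
      push_cast [h2]; ring
    rw [h3, h1]; ring
  show ((((⌊1/x⌋.toNat - 1 : ℕ)) : ℝ) + 1 + gauss x)⁻¹ = x
  rw [hcast]
  have hsum : ((⌊1/x⌋ : ℤ) : ℝ) + gauss x = 1/x := by
    rw [gauss, Int.fract]; ring
  rw [hsum]
  rw [show (1/x)⁻¹ = x by field_simp]

/-- The core estimate: `Am m` is a Lebesgue-null set. -/
lemma volume_Am (m : ℕ) : volume (Am m) = 0 := by
  have hmeas := measurable_Am m
  have hρmeas : Measurable fun t : ℝ => ENNReal.ofReal (1/(1+t)) := by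
    simp only [one_div]
    exact ((measurable_const.add measurable_id).inv).ennreal_ofReal
  set ν : ℝ≥0∞ := ∫⁻ t in Am m, ENNReal.ofReal (1/(1+t)) with hν
  have hν_ne_top : ν ≠ ⊤ := by
    have h1 : ν ≤ volume (Am m) := by
      rw [hν, ← setLIntegral_one (Am m)]
      apply setLIntegral_mono measurable_const
      intro t ht
      have ht0 : 0 < t := Am_pos ht
      have h2 : (1:ℝ)/(1+t) ≤ 1 := by
        rw [div_le_one (by linarith)]; linarith
      calc ENNReal.ofReal (1/(1+t)) ≤ ENNReal.ofReal 1 := ENNReal.ofReal_le_ofReal h2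
      _ = 1 := ENNReal.ofReal_one
    have h2 : volume (Am m) ≤ volume (Set.Icc (1/((m:ℝ)+1)) 1) := measure_mono (Am_subset m)
    rw [Real.volume_Icc] at h2
    exact ne_top_of_le_ne_top ENNReal.ofReal_ne_top (h1.trans h2)
  -- change of variables on each inverse branch
  have himg : ∀ n : ℕ,
      (∫⁻ t in (fun t : ℝ => ((n:ℝ)+1+t)⁻¹) '' Am m, ENNReal.ofReal (1/(1+t)))
        = ∫⁻ t in Am m, ENNReal.ofReal (1/(((n:ℝ)+1+t)*((n:ℝ)+2+t))) := by
    intro n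
    have hderiv : ∀ t ∈ Am m, HasFDerivWithinAt (fun t : ℝ => ((n:ℝ)+1+t)⁻¹)
        ((1 : ℝ →L[ℝ] ℝ).smulRight (-(((n:ℝ)+1+t)^2)⁻¹)) (Am m) t := by
      intro t ht
      have ht0 : 0 < t := Am_pos ht
      have hne : (n:ℝ)+1+t ≠ 0 := by positivity
      have h1 : HasDerivAt (fun u : ℝ => (n:ℝ)+1+u) 1 t := by
        simpa using (hasDerivAt_id t).const_add ((n:ℝ)+1)
      have h2 : HasDerivAt (fun u : ℝ => ((n:ℝ)+1+u)⁻¹) (-(((n:ℝ)+1+t)^2)⁻¹) t := by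
        have h3 := h1.inv hne
        simpa [neg_div, one_div, Pi.inv_def] using h3
      exact h2.hasDerivWithinAt.hasFDerivWithinAt
    have hinj : Set.InjOn (fun t : ℝ => ((n:ℝ)+1+t)⁻¹) (Am m) := by
      intro a ha b hb hab
      have h1 : (n:ℝ)+1+a = (n:ℝ)+1+b := inv_injective hab
      linarith
    rw [MeasureTheory.lintegral_image_eq_lintegral_abs_det_fderiv_mul volume hmeas hderiv hinj]
    apply setLIntegral_congr_fun hmeas
    intro t ht
    have ht0 : 0 < t := Am_pos ht
    have hu : (0:ℝ) < (n:ℝ)+1+t := by positivity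
    have hu2 : (0:ℝ) < (n:ℝ)+2+t := by positivity
    beta_reduce
    rw [ContinuousLinearMap.det_smulRight, ContinuousLinearMap.one_apply, one_mul]
    rw [abs_neg, abs_of_pos (by positivity : (0:ℝ) < (((n:ℝ)+1+t)^2)⁻¹)]
    rw [← ENNReal.ofReal_mul (by positivity)]
    congr 1
    have h1p : (0:ℝ) < 1 + ((n:ℝ)+1+t)⁻¹ := by positivity
    field_simp
    ring
  -- covering estimate
  have hcov : ν ≤ ∑ n : Fin (m+1), ∫⁻ t in Am m,
      ENNReal.ofReal (1/((((n:ℕ):ℝ)+1+t)*(((n:ℕ):ℝ)+2+t))) := by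
    have h1 : ν ≤ ∫⁻ t in ⋃ n : Fin (m+1), (fun t : ℝ => (((n:ℕ):ℝ)+1+t)⁻¹) '' Am m,
        ENNReal.ofReal (1/(1+t)) := lintegral_mono_set (Am_cover m)
    have h2 := MeasureTheory.lintegral_iUnion_le
        (μ := volume.restrict (⊤ : Set ℝ))
        (s := fun n : Fin (m+1) => (fun t : ℝ => (((n:ℕ):ℝ)+1+t)⁻¹) '' Am m)
        (f := fun t => ENNReal.ofReal (1/(1+t)))
    have h2' := MeasureTheory.lintegral_iUnion_le
        (s := fun n : Fin (m+1) => (fun t : ℝ => (((n:ℕ):ℝ)+1+t)⁻¹) '' Am m)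
        (f := fun t => ENNReal.ofReal (1/(1+t))) (μ := volume)
    rw [tsum_fintype] at h2'
    refine h1.trans (h2'.trans ?_)
    apply Finset.sum_le_sum
    intro n _
    rw [himg (n:ℕ)]
  -- telescoping sum
  have hsum : ∑ n : Fin (m+1), (∫⁻ t in Am m,
        ENNReal.ofReal (1/((((n:ℕ):ℝ)+1+t)*(((n:ℕ):ℝ)+2+t))))
      = ∫⁻ t in Am m, ENNReal.ofReal (1/(1+t) - 1/((m:ℝ)+2+t)) := by
    have hmeas_n : ∀ n : Fin (m+1), Measurable fun t : ℝ =>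
        ENNReal.ofReal (1/((((n:ℕ):ℝ)+1+t)*(((n:ℕ):ℝ)+2+t))) := by
      intro n
      simp only [one_div]
      exact (((measurable_const.add measurable_id).mul
        (measurable_const.add measurable_id)).inv).ennreal_ofReal
    rw [← lintegral_finset_sum Finset.univ (fun n _ => hmeas_n n)]
    apply setLIntegral_congr_fun hmeas
    intro t ht
    have ht0 : 0 < t := Am_pos ht
    beta_reduce
    rw [← ENNReal.ofReal_sum_of_nonneg (fun n _ => by positivity)]
    congr 1
    rw [Fin.sum_univ_eq_sum_range (fun j : ℕ => 1/(((j:ℝ)+1+t)*((j:ℝ)+2+t))) (m+1)]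
    have htel : ∑ j ∈ Finset.range (m+1),
        ((fun j : ℕ => 1/((j:ℝ)+1+t)) j - (fun j : ℕ => 1/((j:ℝ)+1+t)) (j+1))
        = 1/(1+t) - 1/((m:ℝ)+2+t) := by
      rw [Finset.sum_range_sub' (f := fun j : ℕ => 1/((j:ℝ)+1+t)) (n := m+1)]
      push_cast
      ring_nf
    rw [← htel]
    apply Finset.sum_congr rfl
    intro j _
    have h1 : (0:ℝ) < (j:ℝ)+1+t := by positivity
    have h2 : (0:ℝ) < (j:ℝ)+2+t := by positivity
    simp only []
    push_cast
    rw [div_sub_div _ _ (ne_of_gt h1) (by positivity : ((j:ℝ)+1+1+t) ≠ 0)]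
    rw [div_eq_div_iff (by positivity) (by positivity)]
    ring
  -- contraction estimate
  have hfinal : (∫⁻ t in Am m, ENNReal.ofReal (1/(1+t) - 1/((m:ℝ)+2+t)))
      ≤ ENNReal.ofReal (1 - 1/((m:ℝ)+3)) * ν := by
    rw [hν, ← lintegral_const_mul' _ _ ENNReal.ofReal_ne_top]
    apply setLIntegral_mono (measurable_const.mul hρmeas)
    intro t ht
    have ht0 : 0 < t := Am_pos ht
    have h1 : (0:ℝ) < 1+t := by linarith
    have h2 : (0:ℝ) < (m:ℝ)+2+t := by positivity
    have h3 : (0:ℝ) < (m:ℝ)+3 := by positivity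
    have hm0 : (0:ℝ) ≤ (m:ℝ) := Nat.cast_nonneg m
    have hkey : (m:ℝ)+2+t ≤ ((m:ℝ)+3)*(1+t) := by nlinarith
    have h4 : 1/(((m:ℝ)+3)*(1+t)) ≤ 1/((m:ℝ)+2+t) :=
      one_div_le_one_div_of_le h2 hkey
    have h6 : (1 - 1/((m:ℝ)+3)) * (1/(1+t)) = 1/(1+t) - 1/(((m:ℝ)+3)*(1+t)) := by
      field_simp
    have h5 : 1/(1+t) - 1/((m:ℝ)+2+t) ≤ (1 - 1/((m:ℝ)+3)) * (1/(1+t)) := by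
      rw [h6]; linarith
    have h7 : (0:ℝ) ≤ 1 - 1/((m:ℝ)+3) := by
      have : 1/((m:ℝ)+3) ≤ 1 := by
        rw [div_le_one h3]; linarith
      linarith
    calc ENNReal.ofReal (1/(1+t) - 1/((m:ℝ)+2+t))
        ≤ ENNReal.ofReal ((1 - 1/((m:ℝ)+3)) * (1/(1+t))) := ENNReal.ofReal_le_ofReal h5
    _ = ENNReal.ofReal (1 - 1/((m:ℝ)+3)) * ENNReal.ofReal (1/(1+t)) :=
        ENNReal.ofReal_mul h7
  have hloop : ν ≤ ENNReal.ofReal (1 - 1/((m:ℝ)+3)) * ν :=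
    hcov.trans (le_of_eq hsum) |>.trans hfinal
  have hν0 : ν = 0 := by
    by_contra h0
    have h1 : ENNReal.ofReal (1 - 1/((m:ℝ)+3)) * ν < 1 * ν := by
      rw [ENNReal.mul_lt_mul_iff_left h0 hν_ne_top, ENNReal.ofReal_lt_one]
      have h3 : (0:ℝ) < (m:ℝ)+3 := by positivity
      have h4 : (0:ℝ) < 1/((m:ℝ)+3) := by positivity
      linarith
    rw [one_mul] at h1
    exact absurd (lt_of_le_of_lt hloop h1) (lt_irrefl ν)
  have h12 : ENNReal.ofReal (1/2) * volume (Am m) ≤ ν := by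
    rw [hν, ← setLIntegral_const (Am m) (ENNReal.ofReal (1/2))]
    apply setLIntegral_mono hρmeas
    intro t ht
    have ht1 : t ≤ 1 := (Am_subset m ht).2
    have ht0 : 0 < t := Am_pos ht
    apply ENNReal.ofReal_le_ofReal
    rw [div_le_div_iff₀ (by norm_num : (0:ℝ) < 2) (by linarith : (0:ℝ) < 1+t)]
    linarith
  rw [hν0] at h12
  have h2 : ENNReal.ofReal (1/2) ≠ 0 := by
    rw [ne_eq, ENNReal.ofReal_eq_zero]
    norm_num
  by_contra hvol
  exact absurd h12 (not_le.mpr (ENNReal.mul_pos h2 hvol))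

lemma volume_image_Am (m k : ℕ) :
    volume ((fun t : ℝ => 1 - ((k:ℝ)+t)⁻¹) '' (Am m)) = 0 := by
  apply MeasureTheory.addHaar_image_eq_zero_of_differentiableOn_of_addHaar_eq_zero
    (μ := volume) ?_ (volume_Am m)
  intro t ht
  have h0 : (0:ℝ) < (k:ℝ) + t := by
    have := Am_pos ht
    have : (0:ℝ) ≤ (k:ℝ) := Nat.cast_nonneg k
    positivity
  have h1 : DifferentiableAt ℝ (fun t : ℝ => 1 - ((k:ℝ)+t)⁻¹) t := by
    apply DifferentiableAt.sub (differentiableAt_const 1)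
    apply DifferentiableAt.inv _ (ne_of_gt h0)
    exact (differentiableAt_id.const_add _)
  exact h1.differentiableWithinAt

/-- For `α < 1/2` there is always (1,2)-matching. -/
lemma matching_small {α : ℝ} (hα0 : 0 < α) (hα : α < 1/2) :
    (T α)^[1] α = (T α)^[2] (1 - α) := by
  have hαIoo : α ∈ Set.Ioo (0:ℝ) 1 := ⟨hα0, by linarith⟩
  have h1α : (0:ℝ) < 1 - α := by linarith
  have h1αIoo : (1:ℝ) - α ∈ Set.Ioo (0:ℝ) 1 := ⟨h1α, by linarith⟩
  have hb1 : (1:ℝ) ≤ 1/(1-α) := by rw [le_div_iff₀ h1α]; linarith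
  have hb2 : 1/(1-α) < 2 := by rw [div_lt_iff₀ h1α]; linarith
  have hg1 : gauss (1-α) = 1/(1-α) - 1 := by
    have := gauss_eq (1-α) 1 (by exact_mod_cast hb1) (by push_cast; linarith)
    simpa using this
  have hgval : gauss (1-α) = α/(1-α) := by
    rw [hg1]; field_simp; ring
  have hgt : ¬ gauss (1-α) ≤ α := by
    rw [hgval]
    push_neg
    rw [lt_div_iff₀ h1α]
    nlinarith
  have hT1 : T α (1-α) = α/(1-α) := by
    rw [T_eq hαIoo h1αIoo, if_neg hgt, hgval]
  have hwIoo : α/(1-α) ∈ Set.Ioo (0:ℝ) 1 := by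
    constructor
    · positivity
    · rw [div_lt_one h1α]; linarith
  have hgw : gauss (α/(1-α)) = gauss α := by
    have h1 : 1/(α/(1-α)) = 1/α - 1 := by
      rw [one_div_div]; field_simp
    rw [gauss, h1, fract_sub_one, gauss]
  show T α α = T α (T α (1-α))
  rw [hT1]
  exact (T_congr hαIoo hwIoo hαIoo hgw).symm

end Stmt10

/-- the set of `α ∈ (0,1)` for which `T_α` does not have the
matching property has Lebesgue measure zero. -/
theorem stmt_10 :
    MeasureTheory.volume
      {α : ℝ | α ∈ Set.Ioo (0:ℝ) 1 ∧
        ¬ ∃ M N : ℕ, (T α)^[M] α = (T α)^[N] (1 - α)} = 0 := by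
  apply measure_mono_null
    (t := (Set.range ((↑) : ℚ → ℝ)) ∪
      ⋃ m : ℕ, ⋃ k : ℕ, (fun t : ℝ => 1 - ((k:ℝ)+t)⁻¹) '' (Stmt10.Am m))
  · rintro α ⟨hαIoo, hNM⟩
    by_cases hirr : Irrational α
    · right
      have hne : α ≠ 1/2 := by
        intro h
        apply Rat.not_irrational (1/2)
        have : ((1/2:ℚ):ℝ) = α := by rw [h]; norm_num
        rwa [this]
      rcases lt_or_gt_of_ne hne with hlt | hgt
      · exfalso
        exact hNM ⟨1, 2, Stmt10.matching_small hαIoo.1 hlt⟩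
      · obtain ⟨m, k, hmem⟩ := Stmt10.bad_mem hgt hαIoo.2 hirr hNM
        exact Set.mem_iUnion.mpr ⟨m, Set.mem_iUnion.mpr ⟨k, hmem⟩⟩
    · left
      rw [Irrational] at hirr
      exact not_not.mp hirr
  · apply measure_union_null
    · exact (Set.countable_range _).measure_zero _
    · exact measure_iUnion_null fun m => measure_iUnion_null fun k =>
        Stmt10.volume_image_Am m k
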